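/- Let $u \in C[0,1]$, $k \ge 3$, and for each $n \ge 0$ define $D_n(u) = \left(\sum_{l=0}^{k^n - 1}(u(l/k^n) - u((l+1)/k^n))^2\right)^{1/2}$. Let $f : \{(x_1, x_2)\} \to \mathbb{R}$ be a continuous function on the closure of the countable set $V = \bigcup_{m\ge0}\{(l/k^m, k^{-(m+1)}) : 0 \le l \le k^m\} \subset [0,1]^2$, and define $\tilde D_m(f)$ to include, among other terms, $\left(\sum_{l}(f(l/k^m, k^{-(m+1)}) - f((l+1)/k^m, k^{-(m+1)}))^2\right)^{1/2}$ and the vertical differences $\left(\sum_l (f(l/k^m, k^{-(m+2)}) - f(l/k^m, k^{-(m+1)}))^2\right)^{1/2}$ at both endpoints of level-$n$ intervals. Then the boundary trace $u(x) = f(x, 0)$ satisfies $D_n(u) \le 3 \sum_{m=n}^{\infty} \tilde D_m(f)$ for every $n \ge 0$, via the telescoping identity $f(l/k^n, 0) = f(l/k^n, k^{-(n+1)}) + \sum_{m=n}^\infty (f(l/k^n, k^{-(m+2)}) - f(l/k^n, k^{-(m+1)}))$ and the triangle inequality in $\ell^2$. -/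

import Mathlib

open Finset Filter Topology

/-- sqrt of sum of squares equals Euclidean norm. -/
private lemma sqrt_sum_sq_eq {N : ℕ} (g : ℕ → ℝ) :
    Real.sqrt (∑ l ∈ Finset.range N, (g l) ^ 2) =
      ‖(WithLp.equiv 2 (Fin N → ℝ)).symm (fun i => g i)‖ := by
  rw [EuclideanSpace.norm_eq, Finset.sum_range]
  congr 1
  exact Finset.sum_congr rfl fun i _ => by
    simp [Real.norm_eq_abs, sq_abs]

/-- Minkowski for three terms. -/
private lemma minkowski3 {N : ℕ} (a b c : ℕ → ℝ) :
    Real.sqrt (∑ l ∈ Finset.range N, (a l + b l + c l) ^ 2) ≤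
      Real.sqrt (∑ l ∈ Finset.range N, (a l) ^ 2) +
      Real.sqrt (∑ l ∈ Finset.range N, (b l) ^ 2) +
      Real.sqrt (∑ l ∈ Finset.range N, (c l) ^ 2) := by
  rw [sqrt_sum_sq_eq, sqrt_sum_sq_eq, sqrt_sum_sq_eq, sqrt_sum_sq_eq]
  have : (WithLp.equiv 2 (Fin N → ℝ)).symm (fun i => a i + b i + c i) =
      (WithLp.equiv 2 (Fin N → ℝ)).symm (fun i => a i) +
      (WithLp.equiv 2 (Fin N → ℝ)).symm (fun i => b i) +
      (WithLp.equiv 2 (Fin N → ℝ)).symm (fun i => c i) := by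
    ext i
    simp
  rw [this]
  exact norm_add₃_le

private lemma vert_bound (k n : ℕ) (hk : 3 ≤ k) (f : ℝ × ℝ → ℝ) (hf : Continuous f)
    (tD : ℕ → ℝ) (htD0 : ∀ m, 0 ≤ tD m) (htDsum : Summable tD)
    (hver : ∀ n m : ℕ, n ≤ m → Real.sqrt (∑ l ∈ Finset.range (k ^ n + 1),
        (f ((l : ℝ) / (k : ℝ) ^ n, 1 / (k : ℝ) ^ (m + 2)) -
          f ((l : ℝ) / (k : ℝ) ^ n, 1 / (k : ℝ) ^ (m + 1))) ^ 2) ≤ tD m) :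
    Real.sqrt (∑ l ∈ Finset.range (k ^ n + 1),
        (f ((l : ℝ) / (k : ℝ) ^ n, 0) -
          f ((l : ℝ) / (k : ℝ) ^ n, 1 / (k : ℝ) ^ (n + 1))) ^ 2) ≤
      ∑' m : ℕ, tD (n + m) := by
  have hk1 : (1 : ℝ) < (k : ℝ) := by exact_mod_cast lt_of_lt_of_le (by norm_num) hk
  set N := k ^ n + 1 with hN
  have hsum' : Summable (fun j => tD (n + j)) :=
    htDsum.comp_injective (add_right_injective n)
  set a : ℕ → EuclideanSpace ℝ (Fin N) := fun j =>
    (WithLp.equiv 2 (Fin N → ℝ)).symm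
      (fun i => f ((i : ℝ) / (k : ℝ) ^ n, 1 / (k : ℝ) ^ (n + j + 1))) with ha
  set b : EuclideanSpace ℝ (Fin N) :=
    (WithLp.equiv 2 (Fin N → ℝ)).symm (fun i => f ((i : ℝ) / (k : ℝ) ^ n, 0)) with hb
  have hw : ∀ j : ℕ, ‖a (j + 1) - a j‖ ≤ tD (n + j) := by
    intro j
    have h := hver n (n + j) (Nat.le_add_right n j)
    rw [sqrt_sum_sq_eq (fun l => f ((l : ℝ) / (k : ℝ) ^ n, 1 / (k : ℝ) ^ (n + j + 2)) -
      f ((l : ℝ) / (k : ℝ) ^ n, 1 / (k : ℝ) ^ (n + j + 1)))] at h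
    exact h
  have hpart : ∀ M : ℕ, ‖a (M + 1) - a 0‖ ≤ ∑' m : ℕ, tD (n + m) := by
    intro M
    have htel : a (M + 1) - a 0 = ∑ j ∈ Finset.range (M + 1), (a (j + 1) - a j) := by
      rw [Finset.sum_range_sub]
    rw [htel]
    calc ‖∑ j ∈ Finset.range (M + 1), (a (j + 1) - a j)‖
        ≤ ∑ j ∈ Finset.range (M + 1), ‖a (j + 1) - a j‖ := norm_sum_le _ _
      _ ≤ ∑ j ∈ Finset.range (M + 1), tD (n + j) :=
          Finset.sum_le_sum fun j _ => hw j
      _ ≤ ∑' m : ℕ, tD (n + m) :=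
          Summable.sum_le_tsum _ (fun j _ => htD0 _) hsum'
  have hlim : Tendsto (fun M => ‖a (M + 1) - a 0‖) atTop (𝓝 ‖b - a 0‖) := by
    have h1 : Tendsto (fun M : ℕ => 1 / (k : ℝ) ^ (n + (M + 1) + 1)) atTop (𝓝 0) := by
      have h2 : Tendsto (fun M : ℕ => ((k : ℝ) ^ (n + (M + 1) + 1))) atTop atTop := by
        apply tendsto_atTop_atTop_of_monotone'
        · intro x y hxy
          exact pow_le_pow_right₀ hk1.le (by omega)
        · rintro ⟨B, hB⟩
          obtain ⟨M, hM⟩ := pow_unbounded_of_one_lt B hk1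
          have := hB (Set.mem_range_self M)
          have h2 : (k : ℝ) ^ M ≤ (k : ℝ) ^ (n + (M + 1) + 1) :=
            pow_le_pow_right₀ hk1.le (by omega)
          linarith
      simpa [Pi.inv_def] using h2.inv_tendsto_atTop
    have hcont : Continuous (fun t : ℝ =>
        ‖(WithLp.equiv 2 (Fin N → ℝ)).symm
          (fun i : Fin N => f ((i : ℝ) / (k : ℝ) ^ n, t)) - a 0‖) := by
      refine Continuous.norm (Continuous.sub ?_ continuous_const)
      exact (PiLp.continuous_toLp 2 (fun _ : Fin N => ℝ)).comp
        (continuous_pi fun i => hf.comp (Continuous.prodMk_right _))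
    have := (hcont.tendsto 0).comp h1
    simpa [ha, hb, Function.comp_def] using this
  have hfinal : ‖b - a 0‖ ≤ ∑' m : ℕ, tD (n + m) :=
    le_of_tendsto hlim (Filter.Eventually.of_forall hpart)
  calc Real.sqrt (∑ l ∈ Finset.range N,
        (f ((l : ℝ) / (k : ℝ) ^ n, 0) -
          f ((l : ℝ) / (k : ℝ) ^ n, 1 / (k : ℝ) ^ (n + 1))) ^ 2)
      = ‖b - a 0‖ := by
        rw [sqrt_sum_sq_eq (fun l => f ((l : ℝ) / (k : ℝ) ^ n, 0) -
          f ((l : ℝ) / (k : ℝ) ^ n, 1 / (k : ℝ) ^ (n + 1)))]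
        congr 1
    _ ≤ ∑' m : ℕ, tD (n + m) := hfinal

/-- Lemma 6.13: boundary increments of a continuous function on the closed
infinite boundary graph are controlled by the tail sum of the graph increments:
`Dₙ(u) ≤ 3 ∑_{m ≥ n} D̃ₘ(f)`, where `u(x) = f(x,0)`. -/
theorem stmt_16 (k : ℕ) (hk : 3 ≤ k) (f : ℝ × ℝ → ℝ) (hf : Continuous f)
    (tD : ℕ → ℝ) (htD0 : ∀ m, 0 ≤ tD m) (htDsum : Summable tD)
    (hhor : ∀ m : ℕ, Real.sqrt (∑ l ∈ Finset.range (k ^ m),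
        (f ((l : ℝ) / (k : ℝ) ^ m, 1 / (k : ℝ) ^ (m + 1)) -
          f (((l : ℝ) + 1) / (k : ℝ) ^ m, 1 / (k : ℝ) ^ (m + 1))) ^ 2) ≤ tD m)
    (hver : ∀ n m : ℕ, n ≤ m → Real.sqrt (∑ l ∈ Finset.range (k ^ n + 1),
        (f ((l : ℝ) / (k : ℝ) ^ n, 1 / (k : ℝ) ^ (m + 2)) -
          f ((l : ℝ) / (k : ℝ) ^ n, 1 / (k : ℝ) ^ (m + 1))) ^ 2) ≤ tD m) :
    ∀ n : ℕ, Real.sqrt (∑ l ∈ Finset.range (k ^ n),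
        (f ((l : ℝ) / (k : ℝ) ^ n, 0) - f (((l : ℝ) + 1) / (k : ℝ) ^ n, 0)) ^ 2) ≤
      3 * ∑' m : ℕ, tD (n + m) := by
  intro n
  set S := ∑' m : ℕ, tD (n + m) with hS
  have hsum' : Summable (fun j => tD (n + j)) :=
    htDsum.comp_injective (add_right_injective n)
  set A : ℕ → ℝ := fun l => f ((l : ℝ) / (k : ℝ) ^ n, 0) -
    f ((l : ℝ) / (k : ℝ) ^ n, 1 / (k : ℝ) ^ (n + 1)) with hA
  set B : ℕ → ℝ := fun l => f ((l : ℝ) / (k : ℝ) ^ n, 1 / (k : ℝ) ^ (n + 1)) -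
    f (((l : ℝ) + 1) / (k : ℝ) ^ n, 1 / (k : ℝ) ^ (n + 1)) with hB
  set C : ℕ → ℝ := fun l => f (((l : ℝ) + 1) / (k : ℝ) ^ n, 1 / (k : ℝ) ^ (n + 1)) -
    f (((l : ℝ) + 1) / (k : ℝ) ^ n, 0) with hC
  have hvertS : Real.sqrt (∑ l ∈ Finset.range (k ^ n + 1), (A l) ^ 2) ≤ S :=
    vert_bound k n hk f hf tD htD0 htDsum hver
  have hAsub : Real.sqrt (∑ l ∈ Finset.range (k ^ n), (A l) ^ 2) ≤ S := by
    refine le_trans (Real.sqrt_le_sqrt ?_) hvertS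
    exact Finset.sum_le_sum_of_subset_of_nonneg
      (Finset.range_subset_range.2 (Nat.le_succ _)) (fun l _ _ => sq_nonneg _)
  have hCsub : Real.sqrt (∑ l ∈ Finset.range (k ^ n), (C l) ^ 2) ≤ S := by
    refine le_trans (Real.sqrt_le_sqrt ?_) hvertS
    have heq : ∑ l ∈ Finset.range (k ^ n), (C l) ^ 2 =
        ∑ l ∈ Finset.range (k ^ n), (A (l + 1)) ^ 2 := by
      refine Finset.sum_congr rfl fun l _ => ?_
      simp only [hA, hC]
      push_cast
      ring
    rw [heq, Finset.sum_range_succ' (fun l => (A l) ^ 2) (k ^ n)]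
    nlinarith [sq_nonneg (A 0)]
  have hBn : Real.sqrt (∑ l ∈ Finset.range (k ^ n), (B l) ^ 2) ≤ S := by
    refine le_trans (hhor n) ?_
    have h0 : tD n = tD (n + 0) := by rw [Nat.add_zero]
    rw [h0]
    exact Summable.le_tsum hsum' 0 (fun j _ => htD0 _)
  calc Real.sqrt (∑ l ∈ Finset.range (k ^ n),
        (f ((l : ℝ) / (k : ℝ) ^ n, 0) - f (((l : ℝ) + 1) / (k : ℝ) ^ n, 0)) ^ 2)
      = Real.sqrt (∑ l ∈ Finset.range (k ^ n), (A l + B l + C l) ^ 2) := by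
        congr 1
        refine Finset.sum_congr rfl fun l _ => ?_
        simp only [hA, hB, hC]
        ring
    _ ≤ Real.sqrt (∑ l ∈ Finset.range (k ^ n), (A l) ^ 2) +
        Real.sqrt (∑ l ∈ Finset.range (k ^ n), (B l) ^ 2) +
        Real.sqrt (∑ l ∈ Finset.range (k ^ n), (C l) ^ 2) := minkowski3 A B C
    _ ≤ S + S + S := by gcongr
    _ = 3 * S := by ring
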